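/- Let T be a tree on n vertices. Then for every integer i with γ(T) < i ≤ ⌊(n + 2γ(T) + 1)/3⌋, one has d_{i−1}(T) ≤ d_i(T); that is, the coefficients of the domination polynomial are non-decreasing from index γ(T) up to index ⌊(n + 2γ(T) + 1)/3⌋. -/

import Mathlib

open scoped Classical

variable {V : Type*} [Fintype V] [DecidableEq V]

/-- `S` is a dominating set of `G`: every vertex is in `S` or adjacent to a vertex of `S`. -/
def IsDomSet (G : SimpleGraph V) (S : Finset V) : Prop :=
  ∀ v : V, v ∈ S ∨ ∃ u ∈ S, G.Adj u v

/-- `S` is a minimal dominating set: it is dominating and no proper subset is dominating. -/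
def MinimalDomSet (G : SimpleGraph V) (S : Finset V) : Prop :=
  IsDomSet G S ∧ ∀ T : Finset V, T ⊂ S → ¬ IsDomSet G T

/-- `d_i(G)`: the number of dominating sets of `G` of cardinality `i`. -/
noncomputable def domCount (G : SimpleGraph V) (i : ℕ) : ℕ :=
  (Finset.univ.filter fun S : Finset V => IsDomSet G S ∧ S.card = i).card

/-- `a(S)`: the set of critical vertices of a dominating set `S`. -/
noncomputable def aSet (G : SimpleGraph V) (S : Finset V) : Finset V :=
  S.filter fun v => ¬ IsDomSet G (S.erase v)

/-- `a(G,i)`: the sum of `|a(S)|` over all dominating sets `S` of cardinality `i`. -/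
noncomputable def aTotal (G : SimpleGraph V) (i : ℕ) : ℕ :=
  ∑ S ∈ Finset.univ.filter (fun S : Finset V => IsDomSet G S ∧ S.card = i), (aSet G S).card

/-- `γ(G)`: the minimum cardinality of a dominating set. -/
noncomputable def gamma (G : SimpleGraph V) : ℕ :=
  sInf {k | ∃ S : Finset V, IsDomSet G S ∧ S.card = k}

/-- `Γ(G)`: the maximum cardinality of a minimal dominating set. -/
noncomputable def bigGamma (G : SimpleGraph V) : ℕ :=
  sSup {k | ∃ S : Finset V, MinimalDomSet G S ∧ S.card = k}

/-- The closed neighbourhood `N[v]` as a finset. -/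
noncomputable def closedNbhd (G : SimpleGraph V) (v : V) : Finset V :=
  Finset.univ.filter fun u => u = v ∨ G.Adj v u

/-- `N_1(S)`: vertices outside `S` with exactly one closed neighbour in `S`. -/
noncomputable def N1Set (G : SimpleGraph V) (S : Finset V) : Finset V :=
  Finset.univ.filter fun v => v ∉ S ∧ (closedNbhd G v ∩ S).card = 1

/-- `N_2(S)`: vertices outside `S` with at least two closed neighbours in `S`. -/
noncomputable def N2Set (G : SimpleGraph V) (S : Finset V) : Finset V :=
  Finset.univ.filter fun v => v ∉ S ∧ 2 ≤ (closedNbhd G v ∩ S).card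

/-- `a_1(S)`: critical vertices whose closed neighbourhood meets `N_1(S)`. -/
noncomputable def a1Set (G : SimpleGraph V) (S : Finset V) : Finset V :=
  (aSet G S).filter fun v => (closedNbhd G v ∩ N1Set G S).Nonempty

/-- `a_2(S)`: critical vertices whose closed neighbourhood misses `N_1(S)`. -/
noncomputable def a2Set (G : SimpleGraph V) (S : Finset V) : Finset V :=
  (aSet G S).filter fun v => closedNbhd G v ∩ N1Set G S = ∅

/-- In the tree `G` rooted at `r`, `x` is a descendant of `y`:
`y` lies on the unique path from `x` to the root `r`. -/
def Descendant (G : SimpleGraph V) (r x y : V) : Prop :=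
  G.dist x r = G.dist x y + G.dist y r

/-- `x` is a child of `y` in `G` rooted at `r`. -/
def IsChild (G : SimpleGraph V) (r x y : V) : Prop :=
  Descendant G r x y ∧ G.dist y x = 1

/-- `p` is the parent of `x` in `G` rooted at `r`. -/
def IsParent (G : SimpleGraph V) (r p x : V) : Prop :=
  IsChild G r x p

/-- `x` is a grandchild of `y` in `G` rooted at `r`. -/
def IsGrandchild (G : SimpleGraph V) (r x y : V) : Prop :=
  Descendant G r x y ∧ G.dist y x = 2

set_option linter.unusedSectionVars false

lemma isPath_length_eq_dist {G : SimpleGraph V} (hT : G.IsTree) {u v : V} (p : G.Walk u v)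
    (hp : p.IsPath) : p.length = G.dist u v := by
  obtain ⟨q, hq⟩ := hT.isConnected.exists_walk_length_eq_dist u v
  have hbp : q.bypass.IsPath := q.bypass_isPath
  have hup := (hT.existsUnique_path u v).unique hp hbp
  have h1 : p.length ≤ G.dist u v := by
    rw [hup, ← hq]; exact q.length_bypass_le
  exact le_antisymm h1 (SimpleGraph.dist_le p)

lemma tree_concat_path {G : SimpleGraph V} (hT : G.IsTree) {r ℓ u : V}
    (hd : G.dist r u ≤ G.dist r ℓ) (ha : G.Adj ℓ u) (P : G.Walk r ℓ) (hP : P.IsPath) :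
    ∃ (q : G.Walk r u), q.concat ha.symm = P := by
  obtain ⟨q, hq, -⟩ := hT.existsUnique_path r u
  by_cases hsup : ℓ ∈ q.support
  · exfalso
    have htake : (q.takeUntil ℓ hsup).IsPath := hq.takeUntil hsup
    have h1 : (q.takeUntil ℓ hsup).length = G.dist r ℓ := isPath_length_eq_dist hT _ htake
    have h2 : q.length = G.dist r u := isPath_length_eq_dist hT _ hq
    have hlen : (q.takeUntil ℓ hsup).length + (q.dropUntil ℓ hsup).length = q.length := by
      rw [← SimpleGraph.Walk.length_append, q.take_spec hsup]
    have hne : ℓ ≠ u := G.ne_of_adj ha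
    have hpos : 0 < (q.dropUntil ℓ hsup).length := by
      rcases Nat.eq_zero_or_pos (q.dropUntil ℓ hsup).length with h0 | h
      · exact absurd (SimpleGraph.Walk.eq_of_length_eq_zero h0) hne
      · exact h
    omega
  · refine ⟨q, ?_⟩
    have hpath : (q.concat ha.symm).IsPath := by
      rw [SimpleGraph.Walk.isPath_def, SimpleGraph.Walk.support_concat]
      simp only [List.concat_eq_append, List.nodup_append, List.nodup_cons, List.not_mem_nil,
        not_false_iff, List.nodup_nil, and_true, List.disjoint_singleton]
      refine ⟨hq.support_nodup, ?_⟩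
      simp [List.disjoint_singleton, hsup]
      exact fun a ha hal => hsup (hal ▸ ha)
    exact (hT.existsUnique_path r ℓ).unique hpath hP

lemma tree_leaf_unique {G : SimpleGraph V} (hT : G.IsTree) {r ℓ u₁ u₂ : V}
    (hd₁ : G.dist r u₁ ≤ G.dist r ℓ) (hd₂ : G.dist r u₂ ≤ G.dist r ℓ)
    (ha₁ : G.Adj ℓ u₁) (ha₂ : G.Adj ℓ u₂) : u₁ = u₂ := by
  obtain ⟨P, hP, -⟩ := hT.existsUnique_path r ℓ
  obtain ⟨q₁, he₁⟩ := tree_concat_path hT hd₁ ha₁ P hP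
  obtain ⟨q₂, he₂⟩ := tree_concat_path hT hd₂ ha₂ P hP
  obtain ⟨hv, -⟩ := SimpleGraph.Walk.concat_inj (he₁.trans he₂.symm)
  exact hv

lemma mem_closedNbhd {G : SimpleGraph V} {u v : V} :
    u ∈ closedNbhd G v ↔ u = v ∨ G.Adj v u := by
  simp [closedNbhd]

lemma closedNbhd_self {G : SimpleGraph V} (v : V) : v ∈ closedNbhd G v :=
  mem_closedNbhd.mpr (Or.inl rfl)

lemma mem_closedNbhd_comm {G : SimpleGraph V} {u v : V} (h : u ∈ closedNbhd G v) :
    v ∈ closedNbhd G u := by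
  rcases mem_closedNbhd.mp h with rfl | h
  · exact closedNbhd_self u
  · exact mem_closedNbhd.mpr (Or.inr h.symm)

lemma two_coloring (G : SimpleGraph V) (hT : G.IsTree) :
    ∀ (n : ℕ) (B W : Finset V), B.card ≤ n →
      (∀ w ∈ W, 2 ≤ (closedNbhd G w ∩ B).card) →
      ∃ X ⊆ B, ∀ w ∈ W,
        ((closedNbhd G w ∩ B) ∩ X).Nonempty ∧ ((closedNbhd G w ∩ B) \ X).Nonempty := by
  intro n
  induction n with
  | zero =>
    intro B W hB hW
    refine ⟨∅, Finset.empty_subset _, fun w hw => ?_⟩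
    exfalso
    have h2 := hW w hw
    have hle0 : (closedNbhd G w ∩ B).card ≤ 0 :=
      le_trans (Finset.card_le_card Finset.inter_subset_right) hB
    omega
  | succ n ih =>
    intro B W hBcard hW
    rcases W.eq_empty_or_nonempty with rfl | ⟨w₀, hw₀⟩
    · exact ⟨∅, Finset.empty_subset _, fun w hw => absurd hw (Finset.notMem_empty w)⟩
    have hR : (B ∪ W).Nonempty := ⟨w₀, Finset.mem_union_right _ hw₀⟩
    obtain ⟨ℓ, hℓR, hmax⟩ := Finset.exists_max_image (B ∪ W) (fun x => G.dist w₀ x) hR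
    have hstar : ∀ x ∈ B ∪ W, ∀ y ∈ B ∪ W, x ∈ closedNbhd G ℓ → y ∈ closedNbhd G ℓ →
        x ≠ ℓ → y ≠ ℓ → x = y := by
      intro x hx y hy hxN hyN hxl hyl
      rcases mem_closedNbhd.mp hxN with h | h
      · exact absurd h hxl
      rcases mem_closedNbhd.mp hyN with h' | h'
      · exact absurd h' hyl
      exact tree_leaf_unique hT (hmax x hx) (hmax y hy) h h'
    have hℓB : ℓ ∈ B := by
      by_contra hnB
      have hℓW : ℓ ∈ W := (Finset.mem_union.mp hℓR).resolve_left hnB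
      have h2 := hW ℓ hℓW
      have hle1 : (closedNbhd G ℓ ∩ B).card ≤ 1 := by
        apply Finset.card_le_one.mpr
        intro a ha b hb
        have haN := Finset.mem_inter.mp ha
        have hbN := Finset.mem_inter.mp hb
        refine hstar a (Finset.mem_union_left _ haN.2) b (Finset.mem_union_left _ hbN.2)
          haN.1 hbN.1 ?_ ?_
        · rintro rfl; exact hnB haN.2
        · rintro rfl; exact hnB hbN.2
      omega
    set B' := B.erase ℓ with hB'def
    have hℓB' : ℓ ∉ B' := Finset.notMem_erase ℓ B
    have hB'B : B' ⊆ B := Finset.erase_subset ℓ B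
    have hB'card : B'.card ≤ n := by
      have hc1 : B'.card = B.card - 1 := by rw [hB'def]; exact Finset.card_erase_of_mem hℓB
      have hc2 : 0 < B.card := Finset.card_pos.mpr ⟨ℓ, hℓB⟩
      omega
    set W₀ := W.filter (fun w => (closedNbhd G w ∩ B').card < 2) with hW₀def
    have hW₀W : ∀ w ∈ W₀, w ∈ W := fun w hw => (Finset.mem_filter.mp hw).1
    have hWW : ∀ w ∈ W, w ∉ W₀ → 2 ≤ (closedNbhd G w ∩ B').card := by
      intro w hw hnw
      by_contra hc
      exact hnw (Finset.mem_filter.mpr ⟨hw, by omega⟩)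
    obtain ⟨X', hX'B', hX'⟩ := ih B' (W \ W₀) hB'card
      (fun w hw => hWW w (Finset.mem_sdiff.mp hw).1 (Finset.mem_sdiff.mp hw).2)
    have hX'B : X' ⊆ B := hX'B'.trans hB'B
    have hℓX' : ℓ ∉ X' := fun h => hℓB' (hX'B' h)
    have hsub : ∀ w : V, closedNbhd G w ∩ B ⊆ insert ℓ (closedNbhd G w ∩ B') := by
      intro w x hx
      have hx' := Finset.mem_inter.mp hx
      by_cases hxl : x = ℓ
      · simp [hxl]
      · exact Finset.mem_insert_of_mem
          (Finset.mem_inter.mpr ⟨hx'.1, Finset.mem_erase.mpr ⟨hxl, hx'.2⟩⟩)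
    have hW₀ℓ : ∀ w ∈ W₀, ℓ ∈ closedNbhd G w ∧ (closedNbhd G w ∩ B').card = 1 := by
      intro w hw
      obtain ⟨hwW, hlt⟩ := Finset.mem_filter.mp hw
      have h2 := hW w hwW
      have hle := Finset.card_le_card (hsub w)
      have hins := Finset.card_insert_le ℓ (closedNbhd G w ∩ B')
      refine ⟨?_, by omega⟩
      by_contra hnl
      have hss : closedNbhd G w ∩ B ⊆ closedNbhd G w ∩ B' := by
        intro x hx
        have hx' := Finset.mem_inter.mp hx
        have hxl : x ≠ ℓ := by rintro rfl; exact hnl hx'.1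
        exact Finset.mem_inter.mpr ⟨hx'.1, Finset.mem_erase.mpr ⟨hxl, hx'.2⟩⟩
      have := Finset.card_le_card hss
      omega
    have hW₀N : ∀ w ∈ W₀, w ∈ closedNbhd G ℓ := fun w hw => mem_closedNbhd_comm ((hW₀ℓ w hw).1)
    -- helper for mono cases (w ∉ W₀)
    have hmono : ∀ (X : Finset V), X' ⊆ X → X ∩ B' ⊆ X' → ∀ w ∈ W, w ∉ W₀ →
        ((closedNbhd G w ∩ B) ∩ X).Nonempty ∧ ((closedNbhd G w ∩ B) \ X).Nonempty := by
      intro X hXX hXB' w hw hnw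
      obtain ⟨h1, h2⟩ := hX' w (Finset.mem_sdiff.mpr ⟨hw, hnw⟩)
      constructor
      · obtain ⟨x, hx⟩ := h1
        have hx' := Finset.mem_inter.mp hx
        have hx'' := Finset.mem_inter.mp hx'.1
        exact ⟨x, Finset.mem_inter.mpr ⟨Finset.mem_inter.mpr ⟨hx''.1, hB'B hx''.2⟩, hXX hx'.2⟩⟩
      · obtain ⟨x, hx⟩ := h2
        have hx' := Finset.mem_sdiff.mp hx
        have hx'' := Finset.mem_inter.mp hx'.1
        refine ⟨x, Finset.mem_sdiff.mpr ⟨Finset.mem_inter.mpr ⟨hx''.1, hB'B hx''.2⟩, ?_⟩⟩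
        intro hxX
        exact hx'.2 (hXB' (Finset.mem_inter.mpr ⟨hxX, hx''.2⟩))
    rcases Finset.eq_empty_or_nonempty W₀ with hW₀e | ⟨w₁, hw₁⟩
    · refine ⟨X', hX'B, fun w hw => ?_⟩
      exact hmono X' subset_rfl Finset.inter_subset_left w hw (by simp [hW₀e])
    -- common singleton z
    obtain ⟨z, hz⟩ := Finset.card_eq_one.mp (hW₀ℓ w₁ hw₁).2
    have hzB' : z ∈ B' := by
      have : z ∈ closedNbhd G w₁ ∩ B' := by rw [hz]; exact Finset.mem_singleton_self z
      exact (Finset.mem_inter.mp this).2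
    have hzℓ : z ≠ ℓ := by rintro rfl; exact hℓB' hzB'
    have haux : ∀ w' ∈ W₀, w' ≠ ℓ → ∀ y, y ∈ closedNbhd G ℓ ∩ B' → y = w' := by
      intro w' hw' hne y hy
      have hy' := Finset.mem_inter.mp hy
      have hyℓ : y ≠ ℓ := by rintro rfl; exact hℓB' hy'.2
      exact hstar y (Finset.mem_union_left _ (hB'B hy'.2))
        w' (Finset.mem_union_right _ (hW₀W w' hw')) hy'.1 (hW₀N w' hw') hyℓ hne
    have hswap : ∀ wa ∈ W₀, ∀ wb ∈ W₀, wa = ℓ → wb ≠ ℓ → ∀ ya, closedNbhd G wa ∩ B' = {ya} →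
        ∀ yb, closedNbhd G wb ∩ B' = {yb} → ya = yb := by
      intro wa hwa wb hwb hae hbne ya hya yb hyb
      have h1 : ya = wb := by
        apply haux wb hwb hbne ya
        rw [← hae, hya]; exact Finset.mem_singleton_self ya
      have hbB' : wb ∈ B' := by
        have hmem : ya ∈ closedNbhd G wa ∩ B' := by rw [hya]; exact Finset.mem_singleton_self ya
        rw [h1] at hmem
        exact (Finset.mem_inter.mp hmem).2
      have h2 : wb ∈ closedNbhd G wb ∩ B' := Finset.mem_inter.mpr ⟨closedNbhd_self wb, hbB'⟩
      rw [hyb] at h2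
      exact h1.trans (Finset.mem_singleton.mp h2)
    have hall : ∀ w ∈ W₀, closedNbhd G w ∩ B' = {z} := by
      intro w hw
      obtain ⟨z', hz'⟩ := Finset.card_eq_one.mp (hW₀ℓ w hw).2
      by_cases hww : w = w₁
      · rw [hww]; exact hz
      · have hWcases : w = ℓ ∨ w₁ = ℓ := by
          by_contra hc
          push_neg at hc
          exact hww (hstar w (Finset.mem_union_right _ (hW₀W w hw))
            w₁ (Finset.mem_union_right _ (hW₀W w₁ hw₁)) (hW₀N w hw) (hW₀N w₁ hw₁) hc.1 hc.2)
        rcases hWcases with h | h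
        · have hw₁ne : w₁ ≠ ℓ := by rintro rfl; exact hww (h.trans rfl)
          have : z' = z := hswap w hw w₁ hw₁ h hw₁ne z' hz' z hz
          rw [hz', this]
        · have hwne : w ≠ ℓ := by rintro rfl; exact hww (h.symm ▸ rfl)
          have : z = z' := hswap w₁ hw₁ w hw h hwne z hz z' hz'
          rw [hz', ← this]
    have hzmem : ∀ w ∈ W₀, z ∈ closedNbhd G w ∩ B := by
      intro w hw
      have : z ∈ closedNbhd G w ∩ B' := by rw [hall w hw]; exact Finset.mem_singleton_self z
      have h' := Finset.mem_inter.mp this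
      exact Finset.mem_inter.mpr ⟨h'.1, hB'B h'.2⟩
    have hℓmem : ∀ w ∈ W₀, ℓ ∈ closedNbhd G w ∩ B :=
      fun w hw => Finset.mem_inter.mpr ⟨(hW₀ℓ w hw).1, hℓB⟩
    by_cases hzX : z ∈ X'
    · refine ⟨X', hX'B, fun w hw => ?_⟩
      by_cases hwW₀ : w ∈ W₀
      · exact ⟨⟨z, Finset.mem_inter.mpr ⟨hzmem w hwW₀, hzX⟩⟩,
          ⟨ℓ, Finset.mem_sdiff.mpr ⟨hℓmem w hwW₀, hℓX'⟩⟩⟩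
      · exact hmono X' subset_rfl Finset.inter_subset_left w hw hwW₀
    · refine ⟨insert ℓ X', Finset.insert_subset hℓB hX'B, fun w hw => ?_⟩
      by_cases hwW₀ : w ∈ W₀
      · refine ⟨⟨ℓ, Finset.mem_inter.mpr ⟨hℓmem w hwW₀, Finset.mem_insert_self ℓ X'⟩⟩,
          ⟨z, Finset.mem_sdiff.mpr ⟨hzmem w hwW₀, ?_⟩⟩⟩
        intro hzi
        rcases Finset.mem_insert.mp hzi with h | h
        · exact hzℓ h
        · exact hzX h
      · refine hmono (insert ℓ X') (Finset.subset_insert ℓ X') ?_ w hw hwW₀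
        intro x hx
        have hx' := Finset.mem_inter.mp hx
        rcases Finset.mem_insert.mp hx'.1 with rfl | h
        · exact absurd hx'.2 hℓB'
        · exact h

lemma isDomSet_mono {G : SimpleGraph V} {S T : Finset V} (h : S ⊆ T) (hS : IsDomSet G S) :
    IsDomSet G T := by
  intro v
  rcases hS v with hv | ⟨u, hu, hadj⟩
  · exact Or.inl (h hv)
  · exact Or.inr ⟨u, h hu, hadj⟩

lemma gamma_le' {G : SimpleGraph V} {S : Finset V} (hS : IsDomSet G S) : gamma G ≤ S.card :=
  Nat.sInf_le ⟨S, hS, rfl⟩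

/-- extract a dominator of `v` inside `S` from `IsDomSet`. -/
lemma exists_dominator {G : SimpleGraph V} {S : Finset V} (hS : IsDomSet G S) (v : V) :
    ∃ s ∈ closedNbhd G v ∩ S, True := by
  rcases hS v with hv | ⟨u, hu, hadj⟩
  · exact ⟨v, Finset.mem_inter.mpr ⟨closedNbhd_self v, hv⟩, trivial⟩
  · exact ⟨u, Finset.mem_inter.mpr ⟨mem_closedNbhd.mpr (Or.inr hadj.symm), hu⟩, trivial⟩

lemma dom_of_closedNbhd {G : SimpleGraph V} {D : Finset V} {v x : V}
    (hx : x ∈ closedNbhd G v) (hxD : x ∈ D) : v ∈ D ∨ ∃ u ∈ D, G.Adj u v := by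
  rcases mem_closedNbhd.mp hx with rfl | h
  · exact Or.inl hxD
  · exact Or.inr ⟨x, hxD, h.symm⟩

lemma key_lemma (G : SimpleGraph V) (hT : G.IsTree) (S : Finset V) (hS : IsDomSet G S) :
    2 * gamma G ≤ S.card + (aSet G S).card := by
  set A := aSet G S with hAdef
  have hAS : A ⊆ S := Finset.filter_subset _ S
  set B := S \ A with hBdef
  set W := Finset.univ.filter (fun w : V => closedNbhd G w ∩ A = ∅) with hWdef
  -- noncritical vertices admit erasure
  have hBdom : ∀ b ∈ B, IsDomSet G (S.erase b) := by
    intro b hb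
    have hb' := Finset.mem_sdiff.mp hb
    by_contra hc
    exact hb'.2 (Finset.mem_filter.mpr ⟨hb'.1, hc⟩)
  have hpre : ∀ w ∈ W, 2 ≤ (closedNbhd G w ∩ B).card := by
    intro w hw
    have hwA : closedNbhd G w ∩ A = ∅ := (Finset.mem_filter.mp hw).2
    have hSsplit : ∀ x, x ∈ closedNbhd G w ∩ S → x ∈ closedNbhd G w ∩ B := by
      intro x hx
      have hx' := Finset.mem_inter.mp hx
      have hxA : x ∉ A := by
        intro hxA
        have : x ∈ closedNbhd G w ∩ A := Finset.mem_inter.mpr ⟨hx'.1, hxA⟩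
        rw [hwA] at this
        exact Finset.notMem_empty x this
      exact Finset.mem_inter.mpr ⟨hx'.1, Finset.mem_sdiff.mpr ⟨hx'.2, hxA⟩⟩
    obtain ⟨s, hs, -⟩ := exists_dominator hS w
    have hsB := hSsplit s hs
    by_contra hc
    push_neg at hc
    have hone : ∀ x ∈ closedNbhd G w ∩ B, x = s := by
      have hcard : (closedNbhd G w ∩ B).card ≤ 1 := by omega
      intro x hx
      exact Finset.card_le_one.mp hcard x hx s hsB
    have hsBmem := Finset.mem_inter.mp hsB
    have hdom' : IsDomSet G (S.erase s) := hBdom s hsBmem.2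
    obtain ⟨t, ht, -⟩ := exists_dominator hdom' w
    have ht' := Finset.mem_inter.mp ht
    have htS : t ∈ S := Finset.mem_of_mem_erase ht'.2
    have hts : t ≠ s := Finset.ne_of_mem_erase ht'.2
    exact hts (hone t (hSsplit t (Finset.mem_inter.mpr ⟨ht'.1, htS⟩)))
  obtain ⟨X, hXB, hX⟩ := two_coloring G hT B.card B W le_rfl hpre
  have hdomAX : ∀ Y : Finset V, (∀ w ∈ W, ((closedNbhd G w ∩ B) ∩ Y).Nonempty) →
      IsDomSet G (A ∪ Y) := by
    intro Y hY v
    rcases Finset.eq_empty_or_nonempty (closedNbhd G v ∩ A) with he | ⟨x, hx⟩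
    · have hvW : v ∈ W := Finset.mem_filter.mpr ⟨Finset.mem_univ v, he⟩
      obtain ⟨x, hx⟩ := hY v hvW
      have hx' := Finset.mem_inter.mp hx
      have hx'' := Finset.mem_inter.mp hx'.1
      exact dom_of_closedNbhd hx''.1 (Finset.mem_union_right _ hx'.2)
    · have hx' := Finset.mem_inter.mp hx
      exact dom_of_closedNbhd hx'.1 (Finset.mem_union_left _ hx'.2)
  have hD1 : IsDomSet G (A ∪ X) := hdomAX X (fun w hw => (hX w hw).1)
  have hD2 : IsDomSet G (A ∪ (B \ X)) := by
    apply hdomAX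
    intro w hw
    obtain ⟨x, hx⟩ := (hX w hw).2
    have hx' := Finset.mem_sdiff.mp hx
    have hx'' := Finset.mem_inter.mp hx'.1
    exact ⟨x, Finset.mem_inter.mpr ⟨hx'.1, Finset.mem_sdiff.mpr ⟨hx''.2, hx'.2⟩⟩⟩
  have g1 : gamma G ≤ (A ∪ X).card := gamma_le' hD1
  have g2 : gamma G ≤ (A ∪ (B \ X)).card := gamma_le' hD2
  have c1 : (A ∪ X).card ≤ A.card + X.card := Finset.card_union_le _ _
  have c2 : (A ∪ (B \ X)).card ≤ A.card + (B \ X).card := Finset.card_union_le _ _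
  have c3 : (B \ X).card + X.card = B.card := Finset.card_sdiff_add_card_eq_card hXB
  have c4 : B.card = S.card - A.card := Finset.card_sdiff_of_subset hAS
  have c5 : A.card ≤ S.card := Finset.card_le_card hAS
  omega

theorem domCount_nondecreasing_segment (G : SimpleGraph V) (hT : G.IsTree) (i : ℕ)
    (h1 : gamma G < i) (h2 : i ≤ (Fintype.card V + 2 * gamma G + 1) / 3) :
    domCount G (i - 1) ≤ domCount G i := by
  have h2' : 3 * i ≤ Fintype.card V + 2 * gamma G + 1 := by
    have := (Nat.le_div_iff_mul_le (by norm_num : 0 < 3)).mp h2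
    omega
  have hi1 : 1 ≤ i := by omega
  have hin : i ≤ Fintype.card V := by omega
  set Di := Finset.univ.filter (fun S : Finset V => IsDomSet G S ∧ S.card = i) with hDi
  set Di' := Finset.univ.filter (fun S : Finset V => IsDomSet G S ∧ S.card = i - 1) with hDi'
  set P := Finset.univ.filter (fun x : Finset V × V =>
    (IsDomSet G x.1 ∧ x.1.card = i) ∧ x.2 ∈ x.1 ∧ IsDomSet G (x.1.erase x.2)) with hP
  set Q := Finset.univ.filter (fun x : Finset V × V =>
    (IsDomSet G x.1 ∧ x.1.card = i - 1) ∧ x.2 ∉ x.1) with hQ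
  have hQcard : Q.card = Di'.card * (Fintype.card V + 1 - i) := by
    rw [Finset.card_eq_sum_card_fiberwise (f := Prod.fst) (t := Di')
      (fun x hx => Finset.mem_filter.mpr ⟨Finset.mem_univ _, ((Finset.mem_filter.mp hx).2).1⟩)]
    rw [Finset.sum_congr rfl (g := fun _ => Fintype.card V + 1 - i) ?_, Finset.sum_const,
      smul_eq_mul]
    intro S hS
    have hSmem := (Finset.mem_filter.mp hS).2
    have hbij : (Q.filter fun x => x.1 = S).card = Sᶜ.card := by
      apply Finset.card_nbij' (i := fun x => x.2) (j := fun v => (S, v))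
      · intro x hx
        obtain ⟨hxQ, hx1⟩ := Finset.mem_filter.mp hx
        have hx2 := (Finset.mem_filter.mp hxQ).2
        rw [Finset.mem_coe, Finset.mem_compl, ← hx1]
        exact hx2.2
      · intro v hv
        refine Finset.mem_filter.mpr ⟨Finset.mem_filter.mpr ⟨Finset.mem_univ _, ?_⟩, rfl⟩
        exact ⟨hSmem, Finset.mem_compl.mp hv⟩
      · intro x hx
        obtain ⟨hxQ, hx1⟩ := Finset.mem_filter.mp hx
        exact Prod.ext hx1.symm rfl
      · intro v hv
        rfl
    rw [hbij, Finset.card_compl, hSmem.2]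
    show Fintype.card V - (i - 1) = Fintype.card V + 1 - i
    omega
  have hPcard : P.card = ∑ S ∈ Di, (S.filter fun v => IsDomSet G (S.erase v)).card := by
    rw [Finset.card_eq_sum_card_fiberwise (f := Prod.fst) (t := Di)
      (fun x hx => Finset.mem_filter.mpr ⟨Finset.mem_univ _, ((Finset.mem_filter.mp hx).2).1⟩)]
    apply Finset.sum_congr rfl
    intro S hS
    have hSmem := (Finset.mem_filter.mp hS).2
    apply Finset.card_nbij' (i := fun x => x.2) (j := fun v => (S, v))
    · intro x hx
      obtain ⟨hxP, hx1⟩ := Finset.mem_filter.mp hx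
      have hx2 := (Finset.mem_filter.mp hxP).2
      rw [← hx1]
      exact Finset.mem_filter.mpr ⟨hx2.2.1, hx2.2.2⟩
    · intro v hv
      have hv' := Finset.mem_filter.mp hv
      exact Finset.mem_filter.mpr ⟨Finset.mem_filter.mpr ⟨Finset.mem_univ _,
        ⟨hSmem, hv'.1, hv'.2⟩⟩, rfl⟩
    · intro x hx
      obtain ⟨hxP, hx1⟩ := Finset.mem_filter.mp hx
      exact Prod.ext hx1.symm rfl
    · intro v hv
      rfl
  have hQP : Q.card ≤ P.card := by
    apply Finset.card_le_card_of_injOn (fun x => (insert x.2 x.1, x.2))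
    · intro x hx
      have hx1 := (Finset.mem_filter.mp hx).2
      have hcard : (insert x.2 x.1).card = i := by
        rw [Finset.card_insert_of_notMem hx1.2, hx1.1.2]
        omega
      refine Finset.mem_filter.mpr ⟨Finset.mem_univ _, ⟨?_, hcard⟩, Finset.mem_insert_self _ _, ?_⟩
      · exact isDomSet_mono (Finset.subset_insert _ _) hx1.1.1
      · rw [Finset.erase_insert hx1.2]
        exact hx1.1.1
    · intro a ha b hb heq
      have ha1 := (Finset.mem_filter.mp ha).2
      have hb1 := (Finset.mem_filter.mp hb).2
      have heq' : (insert a.2 a.1, a.2) = (insert b.2 b.1, b.2) := heq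
      rw [Prod.mk.injEq] at heq'
      have h2eq : a.2 = b.2 := heq'.2
      have h1eq : insert a.2 a.1 = insert b.2 b.1 := heq'.1
      have hfst : a.1 = b.1 := by
        rw [← Finset.erase_insert ha1.2, ← Finset.erase_insert hb1.2, h1eq, h2eq]
      exact Prod.ext hfst h2eq
  have hsum : ∑ S ∈ Di, (S.filter fun v => IsDomSet G (S.erase v)).card
      ≤ Di.card * (Fintype.card V + 1 - i) := by
    rw [← smul_eq_mul, ← Finset.sum_const]
    apply Finset.sum_le_sum
    intro S hS
    have hSmem := (Finset.mem_filter.mp hS).2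
    have hfil := Finset.card_filter_add_card_filter_not
      (p := fun v => IsDomSet G (S.erase v)) (s := S)
    have haS : (S.filter fun v => ¬ IsDomSet G (S.erase v)).card = (aSet G S).card := rfl
    have hkey := key_lemma G hT S hSmem.1
    rw [haS, hSmem.2] at hfil
    omega
  have hd1 : domCount G i = Di.card := rfl
  have hd2 : domCount G (i - 1) = Di'.card := rfl
  have hfinal : Di'.card * (Fintype.card V + 1 - i) ≤ Di.card * (Fintype.card V + 1 - i) := by
    rw [← hQcard]
    exact le_trans hQP (le_trans (le_of_eq hPcard) hsum)
  rw [hd1, hd2]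
  exact Nat.le_of_mul_le_mul_right hfinal (by omega)
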